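/- arXiv:1010.0796 — 3 statements merged into one kernel-verified Lean document; each statement's English description precedes it below -/
import Mathlib

section
/- With the notation of the previous context, the contrast function M satisfies the Parseval decomposition: for all β = (θ, a, υ) ∈ A_0, M(β) = ∑_{l ∈ ℤ, l ≠ 0} |c_l(f*)|² (1 − |φ(lθ − lθ*, a)|²) + (1/J)∑_{j=1}^J (υ_j* − υ_j)². -/
open Complex Real

section Aux
open MeasureTheory intervalIntegral AddCircle

lemma my_lift_cont {g : ℝ → ℂ} (hg : Continuous g) (hper : Function.Periodic g (2 * Real.pi)) :
    Continuous hper.lift := by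
  exact hg.quotient_liftOn' _

lemma parseval_cont (g : ℝ → ℝ) (hg : Continuous g) (hper : Function.Periodic g (2 * Real.pi)) :
    (1 / (2 * Real.pi)) * ∫ t in (0:ℝ)..(2 * Real.pi), (g t)^2
      = ∑' l : ℤ, ‖(1 / (2 * Real.pi)) • ∫ t in (0:ℝ)..(2 * Real.pi),
          (g t : ℂ) * Complex.exp (-Complex.I * (l:ℂ) * t)‖^2 := by
  haveI : Fact (0 < 2 * Real.pi) := ⟨by positivity⟩
  set gc : ℝ → ℂ := fun t => (g t : ℂ) with hgc
  have hperc : Function.Periodic gc (2 * Real.pi) := fun x => by simp [hgc, hper x]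
  have hgcc : Continuous gc := Complex.continuous_ofReal.comp hg
  set F : AddCircle (2 * Real.pi) → ℂ := hperc.lift with hF
  have hFcont : Continuous F := my_lift_cont hgcc hperc
  have hFcoe : ∀ x : ℝ, F (x : AddCircle (2 * Real.pi)) = gc x := fun x => rfl
  set cF : C(AddCircle (2 * Real.pi), ℂ) := ⟨F, hFcont⟩ with hcF
  have key := tsum_sq_fourierCoeff (ContinuousMap.toLp (E := ℂ) 2 haarAddCircle ℂ cF)
  -- rewrite coefficients
  have hcoef : ∀ l : ℤ, fourierCoeff (⇑(ContinuousMap.toLp (E := ℂ) 2 haarAddCircle ℂ cF)) l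
      = (1 / (2 * Real.pi)) • ∫ t in (0:ℝ)..(2 * Real.pi),
          (g t : ℂ) * Complex.exp (-Complex.I * (l:ℂ) * t) := by
    intro l
    rw [fourierCoeff_toLp, fourierCoeff_eq_intervalIntegral _ l 0]
    rw [zero_add]
    have : ∀ x : ℝ, (fourier (-l) (x : AddCircle (2 * Real.pi)) : ℂ) • cF (x : AddCircle (2 * Real.pi))
        = (g x : ℂ) * Complex.exp (-Complex.I * (l:ℂ) * x) := by
      intro x
      rw [fourier_coe_apply]
      show _ * F _ = _
      rw [hFcoe]
      rw [mul_comm]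
      congr 2
      have hpi : (Real.pi : ℂ) ≠ 0 := by
        simpa using Real.pi_ne_zero
      push_cast
      field_simp
      all_goals ring
    rw [intervalIntegral.integral_congr (fun x _ => this x)]
  -- rewrite RHS integral
  have hint : ∫ t : AddCircle (2 * Real.pi),
      ‖(ContinuousMap.toLp (E := ℂ) 2 haarAddCircle ℂ cF) t‖^2 ∂haarAddCircle
      = (1 / (2 * Real.pi)) * ∫ t in (0:ℝ)..(2 * Real.pi), (g t)^2 := by
    have h1 : ∫ t : AddCircle (2 * Real.pi),
        ‖(ContinuousMap.toLp (E := ℂ) 2 haarAddCircle ℂ cF) t‖^2 ∂haarAddCircle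
        = ∫ t : AddCircle (2 * Real.pi), ‖F t‖^2 ∂haarAddCircle := by
      apply MeasureTheory.integral_congr_ae
      filter_upwards [ContinuousMap.coeFn_toLp (p := 2) haarAddCircle (𝕜 := ℂ) cF] with x hx
      rw [hx]; rfl
    rw [h1]
    have h2 : ∫ t in (0:ℝ)..(0 + 2 * Real.pi), ‖F (t : AddCircle (2 * Real.pi))‖^2
        = ∫ t : AddCircle (2 * Real.pi), ‖F t‖^2 := by
      exact AddCircle.intervalIntegral_preimage (2 * Real.pi) 0 (fun z => ‖F z‖^2)
    have h3 : (volume : Measure (AddCircle (2 * Real.pi)))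
        = ENNReal.ofReal (2 * Real.pi) • haarAddCircle := volume_eq_smul_haarAddCircle
    have h5 : ∀ t : ℝ, ‖F (t : AddCircle (2 * Real.pi))‖^2 = g t ^ 2 := by
      intro t
      rw [hFcoe]
      simp [hgc, Complex.norm_real, Real.norm_eq_abs, _root_.sq_abs]
    have h4 : ∫ t : AddCircle (2 * Real.pi), ‖F t‖^2
        = (2 * Real.pi) * ∫ t : AddCircle (2 * Real.pi), ‖F t‖^2 ∂haarAddCircle := by
      rw [h3, MeasureTheory.integral_smul_measure, ENNReal.toReal_ofReal (by positivity), smul_eq_mul]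
    have h6 : ∫ t in (0:ℝ)..(0 + 2 * Real.pi), ‖F (t : AddCircle (2 * Real.pi))‖^2
        = ∫ t in (0:ℝ)..(2 * Real.pi), (g t)^2 := by
      rw [zero_add]
      exact intervalIntegral.integral_congr fun x _ => h5 x
    have := h2.trans h4
    rw [h6] at this
    have hpi : (0:ℝ) < 2 * Real.pi := by positivity
    rw [this, one_div, ← mul_assoc, inv_mul_cancel₀ (ne_of_gt hpi), one_mul]
  rw [← hint, ← key]
  exact tsum_congr fun l => by rw [hcoef l]

lemma shift_coeff (f : ℝ → ℝ) (hf : Continuous f) (hper : Function.Periodic f (2 * Real.pi)) (l : ℤ) (s : ℝ) :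
    ∫ t in (0:ℝ)..(2 * Real.pi), ((f (t + s) : ℂ)) * Complex.exp (-Complex.I * (l:ℂ) * t)
    = Complex.exp (Complex.I * (l:ℂ) * s) * ∫ t in (0:ℝ)..(2 * Real.pi), (f t : ℂ) * Complex.exp (-Complex.I * (l:ℂ) * t) := by
  have h1 := intervalIntegral.integral_comp_add_right (a := (0:ℝ)) (b := 2 * Real.pi)
    (fun u : ℝ => (f u : ℂ) * Complex.exp (-Complex.I * (l:ℂ) * ((u : ℝ) - s))) s
  have h2 : ∀ t : ℝ, (f (t + s) : ℂ) * Complex.exp (-Complex.I * (l:ℂ) * ((t + s : ℝ) - s))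
      = (f (t + s) : ℂ) * Complex.exp (-Complex.I * (l:ℂ) * t) := by
    intro t; congr 2; push_cast; ring
  rw [intervalIntegral.integral_congr (fun x _ => h2 x)] at h1
  rw [h1]
  have h3 : ∀ u : ℝ, (f u : ℂ) * Complex.exp (-Complex.I * (l:ℂ) * ((u : ℝ) - s))
      = Complex.exp (Complex.I * (l:ℂ) * s) * ((f u : ℂ) * Complex.exp (-Complex.I * (l:ℂ) * u)) := by
    intro u
    rw [show (-Complex.I * (l:ℂ) * ((u : ℝ) - s) : ℂ) = Complex.I * (l:ℂ) * s + -Complex.I * (l:ℂ) * u by push_cast; ring,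
      Complex.exp_add]
    ring
  rw [intervalIntegral.integral_congr (fun x _ => h3 x), intervalIntegral.integral_const_mul]
  congr 1
  have hP : Function.Periodic (fun u : ℝ => (f u : ℂ) * Complex.exp (-Complex.I * (l:ℂ) * u)) (2 * Real.pi) := by
    intro x
    simp only
    rw [hper x, show ((-Complex.I * (l:ℂ) * ((x + 2 * Real.pi : ℝ) : ℂ)) : ℂ) = -Complex.I * (l:ℂ) * x + (-l : ℤ) * (2 * Real.pi * Complex.I) by push_cast; ring, Complex.exp_add, Complex.exp_int_mul_two_pi_mul_I, mul_one]
  have h4 := hP.intervalIntegral_add_eq s 0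
  rw [show (2 * Real.pi + s : ℝ) = s + 2 * Real.pi by ring]
  simpa using h4

end Aux

section Main
open MeasureTheory intervalIntegral

/-- Parseval decomposition of the contrast function:
`M(β) = ∑_{l≠0} |c_l(f*)|² (1 − |φ(lθ − lθ*, a)|²) + (1/J)∑_j (υ_j* − υ_j)²`. -/
theorem contrast_parseval_decomposition (J : ℕ) (hJ : 1 ≤ J)
    (f : ℝ → ℝ) (hf : Continuous f) (hper : Function.Periodic f (2 * Real.pi))
    (c : ℤ → ℂ)
    (hc : ∀ l : ℤ, c l = (1 / (2 * Real.pi)) •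
      ∫ t in (0 : ℝ)..(2 * Real.pi), (f t : ℂ) * Complex.exp (-Complex.I * (l : ℂ) * t))
    (hc0 : c 0 = 0)
    (hsum : Summable fun l : ℤ => ‖c l‖)
    (θstar astar υstar : Fin J → ℝ)
    (hastar : ∑ j, (astar j) ^ 2 = (J : ℝ))
    (θ a υ : Fin J → ℝ) (ha : ∑ j, (a j) ^ 2 = (J : ℝ)) :
    (1 / (2 * Real.pi)) * (∫ t in (0 : ℝ)..(2 * Real.pi),
        (1 / (J : ℝ)) * ∑ j, (astar j * f (t - θstar j) + υstar j - υ j) ^ 2)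
      - (1 / (2 * Real.pi)) * (∫ t in (0 : ℝ)..(2 * Real.pi),
        ((1 / (J : ℝ)) * ∑ j, a j * astar j * f (t - θstar j + θ j)) ^ 2)
    = (∑' l : {l : ℤ // l ≠ 0}, ‖c (l : ℤ)‖ ^ 2 *
        (1 - ‖(1 / (J : ℂ)) * ∑ j, (a j : ℂ) * (astar j : ℂ) *
            Complex.exp (Complex.I * (((l : ℤ) : ℝ) * (θ j - θstar j)))‖ ^ 2))
      + (1 / (J : ℝ)) * ∑ j, (υstar j - υ j) ^ 2 := by
  have hπ : (0:ℝ) < 2 * Real.pi := by positivity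
  have hJ0 : (J:ℝ) ≠ 0 := by positivity
  set φ : ℤ → ℂ := fun l => (1 / (J : ℂ)) * ∑ j, (a j : ℂ) * (astar j : ℂ) *
      Complex.exp (Complex.I * (((l : ℤ) : ℝ) * (θ j - θstar j))) with hφdef
  set I2 : ℝ := ∫ t in (0:ℝ)..(2 * Real.pi), (f t)^2 with hI2
  set d : Fin J → ℝ := fun j => υstar j - υ j with hd
  -- mean zero
  have hmean : ∫ t in (0:ℝ)..(2 * Real.pi), f t = 0 := by
    have h0 := (hc 0).symm.trans hc0
    simp only [Int.cast_zero, mul_zero, zero_mul, Complex.exp_zero, mul_one] at h0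
    rw [intervalIntegral.integral_ofReal] at h0
    rcases smul_eq_zero.1 h0 with h | h
    · exact absurd h (by simp [Real.pi_ne_zero])
    · exact_mod_cast h
  -- shifted integrals
  have hsq : Function.Periodic (fun t => (f t)^2) (2 * Real.pi) := fun x => by simp [hper x]
  have hshift2 : ∀ θ0 : ℝ, ∫ t in (0:ℝ)..(2 * Real.pi), (f (t - θ0))^2 = I2 := by
    intro θ0
    have h1 := intervalIntegral.integral_comp_sub_right (a := (0:ℝ)) (b := 2 * Real.pi)
      (fun t => (f t)^2) θ0
    have h2 := hsq.intervalIntegral_add_eq (0 - θ0) 0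
    rw [h1]
    rw [show (2 * Real.pi - θ0 : ℝ) = 0 - θ0 + 2 * Real.pi by ring]
    simpa using h2
  have hshift1 : ∀ θ0 : ℝ, ∫ t in (0:ℝ)..(2 * Real.pi), f (t - θ0) = 0 := by
    intro θ0
    have h1 := intervalIntegral.integral_comp_sub_right (a := (0:ℝ)) (b := 2 * Real.pi) f θ0
    have h2 := hper.intervalIntegral_add_eq (0 - θ0) 0
    rw [h1, show (2 * Real.pi - θ0 : ℝ) = 0 - θ0 + 2 * Real.pi by ring]
    simpa using h2.trans (by simpa using hmean)
  have hfc : ∀ s : ℝ, Continuous (fun t : ℝ => f (t - s)) :=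
    fun s => hf.comp (continuous_id.sub continuous_const)
  have hexpc : ∀ l : ℤ, Continuous (fun t : ℝ => Complex.exp (-Complex.I * (l:ℂ) * t)) :=
    fun l => Complex.continuous_exp.comp (continuous_const.mul Complex.continuous_ofReal)
  -- first integral
  have hA : (∫ t in (0 : ℝ)..(2 * Real.pi),
      (1 / (J : ℝ)) * ∑ j, (astar j * f (t - θstar j) + υstar j - υ j) ^ 2)
      = (1 / (J : ℝ)) * (J * I2 + 2 * Real.pi * ∑ j, (d j)^2) := by
    rw [intervalIntegral.integral_const_mul]
    congr 1
    rw [intervalIntegral.integral_finset_sum]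
    · have hterm : ∀ j : Fin J, (∫ t in (0:ℝ)..(2 * Real.pi),
          (astar j * f (t - θstar j) + υstar j - υ j) ^ 2)
          = (astar j)^2 * I2 + 2 * Real.pi * (d j)^2 := by
        intro j
        have hre : ∀ t : ℝ, (astar j * f (t - θstar j) + υstar j - υ j) ^ 2
            = (astar j)^2 * (f (t - θstar j))^2 + ((2 * astar j * d j) * f (t - θstar j) + (d j)^2) := by
          intro t; simp only [hd]; ring
        rw [intervalIntegral.integral_congr (fun x _ => hre x)]
        have hint1 : IntervalIntegrable (fun t => (astar j)^2 * (f (t - θstar j))^2) volume 0 (2 * Real.pi) :=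
          (continuous_const.mul ((hfc (θstar j)).pow 2)).intervalIntegrable _ _
        have hint2 : IntervalIntegrable (fun t => (2 * astar j * d j) * f (t - θstar j) + (d j)^2) volume 0 (2 * Real.pi) :=
          ((continuous_const.mul (hfc (θstar j))).add continuous_const).intervalIntegrable _ _
        rw [intervalIntegral.integral_add hint1 hint2,
          intervalIntegral.integral_const_mul, hshift2]
        have hint3 : IntervalIntegrable (fun t => (2 * astar j * d j) * f (t - θstar j)) volume 0 (2 * Real.pi) :=
          (continuous_const.mul (hfc (θstar j))).intervalIntegrable _ _
        have hint4 : IntervalIntegrable (fun _ : ℝ => (d j)^2) volume 0 (2 * Real.pi) :=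
          intervalIntegrable_const
        rw [intervalIntegral.integral_add hint3 hint4,
          intervalIntegral.integral_const_mul, hshift1, intervalIntegral.integral_const]
        simp
      rw [Finset.sum_congr rfl (fun j _ => hterm j), Finset.sum_add_distrib,
        ← Finset.sum_mul, hastar, ← Finset.mul_sum]
    · intro j _
      exact ((((continuous_const.mul (hfc (θstar j))).add continuous_const).sub
        continuous_const).pow 2).intervalIntegrable _ _
  -- Parseval for f
  have hP1 : (1 / (2 * Real.pi)) * I2 = ∑' l : ℤ, ‖c l‖^2 := by
    rw [hI2, parseval_cont f hf hper]
    exact tsum_congr fun l => by rw [hc l]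
  -- second function
  set G2 : ℝ → ℝ := fun t => (1 / (J : ℝ)) * ∑ j, a j * astar j * f (t - θstar j + θ j) with hG2
  have hfc2 : ∀ j : Fin J, Continuous (fun t : ℝ => f (t - θstar j + θ j)) :=
    fun j => hf.comp ((continuous_id.sub continuous_const).add continuous_const)
  have hG2cont : Continuous G2 :=
    continuous_const.mul (continuous_finset_sum _ fun j _ => continuous_const.mul (hfc2 j))
  have hG2per : Function.Periodic G2 (2 * Real.pi) := by
    intro x
    simp only [hG2]
    congr 1
    refine Finset.sum_congr rfl fun j _ => ?_
    congr 1
    rw [show (x + 2 * Real.pi - θstar j + θ j : ℝ) = (x - θstar j + θ j) + 2 * Real.pi by ring,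
      hper]
  -- coefficient of G2
  have hcoefG2 : ∀ l : ℤ, ((1 / (2 * Real.pi)) • ∫ t in (0:ℝ)..(2 * Real.pi),
      (G2 t : ℂ) * Complex.exp (-Complex.I * (l:ℂ) * t)) = φ l * c l := by
    intro l
    have hint : ∀ j : Fin J, (∫ t in (0:ℝ)..(2 * Real.pi),
        ((f (t - θstar j + θ j) : ℝ) : ℂ) * Complex.exp (-Complex.I * (l:ℂ) * t))
        = Complex.exp (Complex.I * (l:ℂ) * ((θ j - θstar j : ℝ) : ℂ)) *
          ∫ t in (0:ℝ)..(2 * Real.pi), (f t : ℂ) * Complex.exp (-Complex.I * (l:ℂ) * t) := by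
      intro j
      have := shift_coeff f hf hper l (θ j - θstar j)
      rw [← this]
      apply intervalIntegral.integral_congr
      intro x _
      congr 2
      ring
    have hG2c : ∀ t : ℝ, (G2 t : ℂ) * Complex.exp (-Complex.I * (l:ℂ) * t)
        = (1 / (J:ℂ)) * ∑ j, ((a j : ℂ) * (astar j : ℂ)) *
          (((f (t - θstar j + θ j) : ℝ) : ℂ) * Complex.exp (-Complex.I * (l:ℂ) * t)) := by
      intro t
      simp only [hG2]
      push_cast
      rw [mul_assoc, Finset.sum_mul]
      congr 1
      exact Finset.sum_congr rfl fun j _ => by ring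
    rw [intervalIntegral.integral_congr (fun x _ => hG2c x)]
    have hIG : ∀ j : Fin J, IntervalIntegrable (fun t : ℝ => ((a j : ℂ) * (astar j : ℂ)) *
        (((f (t - θstar j + θ j) : ℝ) : ℂ) * Complex.exp (-Complex.I * (l:ℂ) * t)))
        volume 0 (2 * Real.pi) := by
      intro j
      have : Continuous (fun t : ℝ => ((a j : ℂ) * (astar j : ℂ)) *
          (((f (t - θstar j + θ j) : ℝ) : ℂ) * Complex.exp (-Complex.I * (l:ℂ) * t))) :=
        continuous_const.mul ((Complex.continuous_ofReal.comp (hfc2 j)).mul (hexpc l))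
      exact this.intervalIntegrable _ _
    rw [intervalIntegral.integral_const_mul, intervalIntegral.integral_finset_sum
      (fun j _ => hIG j)]
    have : ∀ j : Fin J, (∫ t in (0:ℝ)..(2 * Real.pi), ((a j : ℂ) * (astar j : ℂ)) *
        (((f (t - θstar j + θ j) : ℝ) : ℂ) * Complex.exp (-Complex.I * (l:ℂ) * t)))
        = ((a j : ℂ) * (astar j : ℂ)) * (Complex.exp (Complex.I * (l:ℂ) * ((θ j - θstar j : ℝ) : ℂ)) *
          ∫ t in (0:ℝ)..(2 * Real.pi), (f t : ℂ) * Complex.exp (-Complex.I * (l:ℂ) * t)) := by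
      intro j
      rw [intervalIntegral.integral_const_mul, hint j]
    rw [Finset.sum_congr rfl (fun j _ => this j)]
    rw [hc l, hφdef]
    have hexp : ∀ j : Fin J, Complex.exp (Complex.I * (((l : ℤ) : ℝ) * (θ j - θstar j) : ℝ))
        = Complex.exp (Complex.I * (l:ℂ) * ((θ j - θstar j : ℝ):ℂ)) := by
      intro j; congr 1; push_cast; ring
    simp only [Complex.real_smul, Finset.mul_sum, Finset.sum_mul]
    refine Finset.sum_congr rfl fun j _ => ?_
    push_cast
    rw [mul_assoc Complex.I]
    ring
  -- Parseval for G2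
  have hP2 : (1 / (2 * Real.pi)) * (∫ t in (0 : ℝ)..(2 * Real.pi),
      ((1 / (J : ℝ)) * ∑ j, a j * astar j * f (t - θstar j + θ j)) ^ 2)
      = ∑' l : ℤ, ‖c l‖^2 * ‖φ l‖^2 := by
    have := parseval_cont G2 hG2cont hG2per
    rw [show (∫ t in (0 : ℝ)..(2 * Real.pi),
      ((1 / (J : ℝ)) * ∑ j, a j * astar j * f (t - θstar j + θ j)) ^ 2)
      = ∫ t in (0:ℝ)..(2 * Real.pi), (G2 t)^2 by rfl, this]
    refine tsum_congr fun l => ?_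
    rw [hcoefG2 l, norm_mul, mul_pow, mul_comm]
  -- summability
  have hS2 : Summable (fun l : ℤ => ‖c l‖^2) := by
    have ht := hsum.tendsto_cofinite_zero
    have hev : ∀ᶠ l in Filter.cofinite, ‖c l‖ ≤ 1 := ht.eventually (eventually_le_nhds zero_lt_one)
    apply Summable.of_norm_bounded_eventually hsum
    filter_upwards [hev] with l hl
    rw [Real.norm_eq_abs, _root_.abs_of_nonneg (by positivity)]
    nlinarith [norm_nonneg (c l)]
  set K : ℝ := (1 / (J:ℝ)) * ∑ j, |a j| * |astar j| with hK
  have hφbound : ∀ l : ℤ, ‖φ l‖ ≤ K := by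
    intro l
    rw [hφdef]
    simp only
    rw [norm_mul]
    refine mul_le_mul ?_ ?_ (norm_nonneg _) ?_
    · rw [norm_div, norm_one, Complex.norm_natCast]
    · refine (norm_sum_le _ _).trans ?_
      refine Finset.sum_le_sum fun j _ => ?_
      rw [norm_mul, norm_mul]
      have hre : (Complex.I * ((((l:ℤ):ℝ):ℂ) * (((θ j):ℂ) - ((θstar j):ℂ)))).re = 0 := by
        simp [Complex.mul_re]
      have h1 : ‖Complex.exp (Complex.I * ((((l:ℤ):ℝ):ℂ) * (((θ j):ℂ) - ((θstar j):ℂ))))‖ = 1 := by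
        rw [Complex.norm_exp, hre, Real.exp_zero]
      rw [h1, mul_one]
      simp [Complex.norm_real, Real.norm_eq_abs]
    · positivity
  have hSφ : Summable (fun l : ℤ => ‖c l‖^2 * ‖φ l‖^2) := by
    apply Summable.of_nonneg_of_le (fun l => by positivity)
      (fun l => ?_) (hS2.mul_right (K^2))
    have h1 : ‖φ l‖^2 ≤ K^2 := by
      have := hφbound l
      nlinarith [norm_nonneg (φ l)]
    nlinarith [sq_nonneg ‖c l‖]
  -- assemble
  rw [hA, hP2]
  have hLHS : (1 / (2 * Real.pi)) * ((1 / (J : ℝ)) * (J * I2 + 2 * Real.pi * ∑ j, (d j)^2))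
      = (1 / (2 * Real.pi)) * I2 + (1 / (J:ℝ)) * ∑ j, (d j)^2 := by
    field_simp
  rw [hLHS, hP1]
  have hsub : (∑' l : ℤ, ‖c l‖^2) - (∑' l : ℤ, ‖c l‖^2 * ‖φ l‖^2)
      = ∑' l : ℤ, ‖c l‖^2 * (1 - ‖φ l‖^2) := by
    rw [← hS2.tsum_sub hSφ]
    exact tsum_congr fun l => by ring
  have hsupp : (∑' l : ℤ, ‖c l‖^2 * (1 - ‖φ l‖^2))
      = ∑' l : {l : ℤ // l ≠ 0}, ‖c (l:ℤ)‖^2 * (1 - ‖φ (l:ℤ)‖^2) := by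
    refine (tsum_subtype_eq_of_support_subset ?_).symm
    intro l hl
    simp only [Function.mem_support] at hl
    intro h0
    exact hl (by rw [h0, hc0]; simp)
  have hfinal := hsub.trans hsupp
  linarith [hfinal]

end Main
end

section
/- Let J ≥ 2, σ* > 0, a* ∈ ℝ^J with all a_j* nonzero, and let f* : ℝ → ℝ be 2π-periodic, continuously differentiable, not constant, with c_0(f*) = 0. On the space H = ℝ^{J−1} × ℝ^{J−1} × ℝ^J × ℝ × F_0 (with F_0 the continuous 2π-periodic functions of zero mean), the symmetric bilinear form ⟨h, h'⟩ defined by ⟨h,h⟩ = J h_σ²/σ*² + (1/σ*²)‖a_1* h_f − ∑_{j=2}^J h_{a,j}(a_j*/a_1*) f* + h_{υ,1}‖²_{L²} + (1/σ*²)∑_{j=2}^J ‖a_j* h_f + h_{a,j} f* − h_{θ,j} a_j* ∂f* + h_{υ,j}‖²_{L²} is positive definite, i.e., ⟨h,h⟩ = 0 implies h = 0. -/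
open Complex Real

lemma zero_of_sq_integral (g : ℝ → ℝ) (hc : Continuous g)
    (hp : Function.Periodic g (2 * Real.pi))
    (h : (∫ t in (0:ℝ)..(2 * Real.pi), g t ^ 2) = 0) : ∀ t, g t = 0 := by
  have hπ : (0:ℝ) < 2 * Real.pi := by positivity
  have key : ∀ t ∈ Set.Icc (0:ℝ) (2 * Real.pi), g t = 0 := by
    by_contra hcon
    push_neg at hcon
    obtain ⟨t, ht, hgt⟩ := hcon
    have hpos : 0 < ∫ t in (0:ℝ)..(2 * Real.pi), g t ^ 2 :=
      intervalIntegral.integral_pos hπ ((hc.pow 2).continuousOn)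
        (fun x _ => sq_nonneg _) ⟨t, ht, by positivity⟩
    linarith
  intro t
  obtain ⟨y, hy, hgy⟩ := hp.exists_mem_Ico₀ hπ t
  rw [hgy]
  exact key y ⟨hy.1, hy.2.le⟩

lemma combo_aux (c1 c2 c3 c4 : ℝ) (u v w : ℝ → ℝ)
    (hu : Continuous u) (hv : Continuous v) (hw : Continuous w)
    (hu0 : (∫ t in (0:ℝ)..(2 * Real.pi), u t) = 0)
    (hv0 : (∫ t in (0:ℝ)..(2 * Real.pi), v t) = 0)
    (hw0 : (∫ t in (0:ℝ)..(2 * Real.pi), w t) = 0)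
    (h : ∀ t, c1 * u t + c2 * v t + c3 * w t + c4 = 0) : c4 = 0 := by
  have hπ : (0:ℝ) < 2 * Real.pi := by positivity
  have hint : (∫ t in (0:ℝ)..(2 * Real.pi), (c1 * u t + c2 * v t + c3 * w t + c4)) = 0 := by
    simp [h]
  rw [intervalIntegral.integral_add (Continuous.intervalIntegrable (by fun_prop) _ _)
        (intervalIntegrable_const),
      intervalIntegral.integral_add (Continuous.intervalIntegrable (by fun_prop) _ _)
        (Continuous.intervalIntegrable (by fun_prop) _ _),
      intervalIntegral.integral_add (Continuous.intervalIntegrable (u := fun x => c1 * u x) (continuous_const.mul hu) _ _)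
        (Continuous.intervalIntegrable (u := fun x => c2 * v x) (continuous_const.mul hv) _ _),
      intervalIntegral.integral_const_mul, intervalIntegral.integral_const_mul,
      intervalIntegral.integral_const_mul, hu0, hv0, hw0,
      intervalIntegral.integral_const] at hint
  simp only [mul_zero, add_zero, zero_add, smul_eq_mul, sub_zero] at hint
  exact (mul_eq_zero.mp hint).resolve_left (ne_of_gt hπ)

/-- The inner product of the tangent space of the shape invariant model is
positive definite: `⟨h,h⟩ = 0` implies `h = 0`. -/
theorem tangent_inner_product_definite (J : ℕ) (hJ : 2 ≤ J)
    (σstar : ℝ) (hσstar : 0 < σstar)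
    (astar : Fin J → ℝ) (hastar : ∀ j, astar j ≠ 0)
    (f f' : ℝ → ℝ) (hderiv : ∀ t, HasDerivAt f (f' t) t) (hf' : Continuous f')
    (hper : Function.Periodic f (2 * Real.pi))
    (hmean : (∫ t in (0 : ℝ)..(2 * Real.pi), f t) = 0)
    (hnonconst : ∃ s t : ℝ, f s ≠ f t)
    (hθ ha hυ : Fin J → ℝ) (hθ0 : hθ ⟨0, by omega⟩ = 0) (ha0 : ha ⟨0, by omega⟩ = 0)
    (hσ : ℝ) (hfdir : ℝ → ℝ) (hfc : Continuous hfdir)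
    (hfper : Function.Periodic hfdir (2 * Real.pi))
    (hfmean : (∫ t in (0 : ℝ)..(2 * Real.pi), hfdir t) = 0)
    (hzero :
      (J : ℝ) * hσ ^ 2 / σstar ^ 2
      + (1 / σstar ^ 2) * (∫ t in (0 : ℝ)..(2 * Real.pi),
          (astar ⟨0, by omega⟩ * hfdir t
            - (∑ j ∈ Finset.univ \ {(⟨0, by omega⟩ : Fin J)}, ha j * (astar j / astar ⟨0, by omega⟩) * f t)
            + hυ ⟨0, by omega⟩) ^ 2)
      + (1 / σstar ^ 2) * ∑ j ∈ Finset.univ \ {(⟨0, by omega⟩ : Fin J)},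
          ∫ t in (0 : ℝ)..(2 * Real.pi),
            (astar j * hfdir t + ha j * f t - hθ j * astar j * f' t + hυ j) ^ 2
      = 0) :
    hσ = 0 ∧ hθ = 0 ∧ ha = 0 ∧ hυ = 0 ∧ ∀ t, hfdir t = 0 := by
  have hπ : (0:ℝ) < 2 * Real.pi := by positivity
  set j0 : Fin J := ⟨0, by omega⟩ with hj0
  have ha0' : astar j0 ≠ 0 := hastar j0
  have hdifff : Differentiable ℝ f := fun t => (hderiv t).differentiableAt
  have hcf : Continuous f := hdifff.continuous
  -- f' is periodic
  have hperf' : Function.Periodic f' (2 * Real.pi) := by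
    intro t
    have h1 : HasDerivAt (fun x => f (x + 2 * Real.pi)) (f' (t + 2 * Real.pi) * 1) t :=
      (hderiv (t + 2 * Real.pi)).comp t ((hasDerivAt_id t).add_const _)
    rw [mul_one] at h1
    have h2 : (fun x => f (x + 2 * Real.pi)) = f := funext hper
    rw [h2] at h1
    exact h1.unique (hderiv t)
  -- key integrals
  have hIf' : (∫ t in (0:ℝ)..(2 * Real.pi), f' t) = 0 := by
    rw [intervalIntegral.integral_eq_sub_of_hasDerivAt (fun x _ => hderiv x)
      (hf'.intervalIntegrable _ _)]
    have h := hper 0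
    rw [zero_add] at h
    rw [h, sub_self]
  have hIff' : (∫ t in (0:ℝ)..(2 * Real.pi), f t * f' t) = 0 := by
    have hd : ∀ x, HasDerivAt (fun y => f y ^ 2 / 2) (f x * f' x) x := by
      intro x
      have := ((hderiv x).pow 2).div_const 2
      convert this using 1
      all_goals first | rfl | (simp; ring)
    rw [intervalIntegral.integral_eq_sub_of_hasDerivAt (fun x _ => hd x)
      ((hcf.mul hf').intervalIntegrable _ _)]
    have h := hper 0
    rw [zero_add] at h
    rw [h, sub_self]
  have hfne : ∃ t, f t ≠ 0 := by
    by_contra hcon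
    push_neg at hcon
    obtain ⟨s, t, hst⟩ := hnonconst
    exact hst (by rw [hcon, hcon])
  have hIff : 0 < ∫ t in (0:ℝ)..(2 * Real.pi), f t ^ 2 := by
    rcases (intervalIntegral.integral_nonneg hπ.le fun u _ => sq_nonneg (f u)).lt_or_eq with h | h
    · exact h
    · exfalso
      obtain ⟨t, ht⟩ := hfne
      exact ht (zero_of_sq_integral f hcf hper h.symm t)
  -- split hzero into pieces
  have hA : 0 ≤ (J:ℝ) * hσ ^ 2 / σstar ^ 2 := by positivity
  have hB : 0 ≤ ∫ t in (0:ℝ)..(2 * Real.pi),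
      (astar j0 * hfdir t
        - (∑ j ∈ Finset.univ \ {j0}, ha j * (astar j / astar j0) * f t) + hυ j0) ^ 2 :=
    intervalIntegral.integral_nonneg hπ.le fun u _ => sq_nonneg _
  have hCj : ∀ j ∈ Finset.univ \ {j0}, 0 ≤ ∫ t in (0:ℝ)..(2 * Real.pi),
      (astar j * hfdir t + ha j * f t - hθ j * astar j * f' t + hυ j) ^ 2 :=
    fun j _ => intervalIntegral.integral_nonneg hπ.le fun u _ => sq_nonneg _
  have hC : 0 ≤ ∑ j ∈ Finset.univ \ {j0}, ∫ t in (0:ℝ)..(2 * Real.pi),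
      (astar j * hfdir t + ha j * f t - hθ j * astar j * f' t + hυ j) ^ 2 :=
    Finset.sum_nonneg hCj
  have hinv : (0:ℝ) < 1 / σstar ^ 2 := by positivity
  have hAz : (J:ℝ) * hσ ^ 2 / σstar ^ 2 = 0 := by
    nlinarith [mul_nonneg hinv.le hB, mul_nonneg hinv.le hC]
  have hBz : (∫ t in (0:ℝ)..(2 * Real.pi),
      (astar j0 * hfdir t
        - (∑ j ∈ Finset.univ \ {j0}, ha j * (astar j / astar j0) * f t) + hυ j0) ^ 2) = 0 := by
    have h1 : (1 / σstar ^ 2) * (∫ t in (0:ℝ)..(2 * Real.pi),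
        (astar j0 * hfdir t
          - (∑ j ∈ Finset.univ \ {j0}, ha j * (astar j / astar j0) * f t) + hυ j0) ^ 2) = 0 := by
      nlinarith [mul_nonneg hinv.le hB, mul_nonneg hinv.le hC]
    exact (mul_eq_zero.mp h1).resolve_left (ne_of_gt hinv)
  have hCz : ∀ j ∈ Finset.univ \ {j0}, (∫ t in (0:ℝ)..(2 * Real.pi),
      (astar j * hfdir t + ha j * f t - hθ j * astar j * f' t + hυ j) ^ 2) = 0 := by
    have h1 : (1 / σstar ^ 2) * (∑ j ∈ Finset.univ \ {j0}, ∫ t in (0:ℝ)..(2 * Real.pi),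
        (astar j * hfdir t + ha j * f t - hθ j * astar j * f' t + hυ j) ^ 2) = 0 := by
      nlinarith [mul_nonneg hinv.le hB, mul_nonneg hinv.le hC]
    have h2 := (mul_eq_zero.mp h1).resolve_left (ne_of_gt hinv)
    exact fun j hj => (Finset.sum_eq_zero_iff_of_nonneg hCj).mp h2 j hj
  -- hσ = 0
  have hJpos : (0:ℝ) < (J:ℝ) := by
    have : (2:ℝ) ≤ (J:ℝ) := by exact_mod_cast hJ
    linarith
  have hσz : hσ = 0 := by
    have h1 : (J:ℝ) * hσ ^ 2 = 0 := by
      have := div_eq_zero_iff.mp hAz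
      rcases this with h | h
      · exact h
      · exact absurd h (by positivity)
    have h2 : hσ ^ 2 = 0 := by
      rcases mul_eq_zero.mp h1 with h | h
      · exact absurd h (ne_of_gt hJpos)
      · exact h
    exact pow_eq_zero_iff (n := 2) (by norm_num) |>.mp h2
  -- pointwise vanishing
  set S : ℝ := ∑ j ∈ Finset.univ \ {j0}, ha j * (astar j / astar j0) with hS
  have hg0 : ∀ t, astar j0 * hfdir t - S * f t + hυ j0 = 0 := by
    apply zero_of_sq_integral _ (by fun_prop)
      (fun t => by simp only [hper t, hfper t])
    have he : (∫ t in (0:ℝ)..(2 * Real.pi), (astar j0 * hfdir t - S * f t + hυ j0) ^ 2)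
        = ∫ t in (0:ℝ)..(2 * Real.pi),
          (astar j0 * hfdir t
            - (∑ j ∈ Finset.univ \ {j0}, ha j * (astar j / astar j0) * f t) + hυ j0) ^ 2 := by
      apply intervalIntegral.integral_congr
      intro t _
      have h1 : (∑ j ∈ Finset.univ \ {j0}, ha j * (astar j / astar j0) * f t) = S * f t := by
        rw [hS, Finset.sum_mul]
      simp only [h1]
    exact he.trans hBz
  have hgj : ∀ j ∈ Finset.univ \ {j0}, ∀ t,
      astar j * hfdir t + ha j * f t - hθ j * astar j * f' t + hυ j = 0 := by
    intro j hj
    exact zero_of_sq_integral _ (by fun_prop)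
      (fun t => by simp only [hper t, hfper t, hperf' t]) (hCz j hj)
  -- constants vanish
  have hυ0z : hυ j0 = 0 := by
    apply combo_aux (astar j0) (-S) 0 (hυ j0) hfdir f f' hfc hcf hf' hfmean hmean hIf'
    intro t
    linear_combination hg0 t
  have hυjz : ∀ j ∈ Finset.univ \ {j0}, hυ j = 0 := by
    intro j hj
    apply combo_aux (astar j) (ha j) (-(hθ j * astar j)) (hυ j) hfdir f f' hfc hcf hf'
      hfmean hmean hIf'
    intro t
    linear_combination hgj j hj t
  -- hfdir in terms of f
  set c : ℝ := S / astar j0 with hc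
  have hfrel : ∀ t, hfdir t = c * f t := by
    intro t
    have h := hg0 t
    rw [hυ0z] at h
    rw [hc]
    field_simp
    linear_combination h
  -- per-j conclusions
  have hK : ∀ j ∈ Finset.univ \ {j0}, astar j * c + ha j = 0 := by
    intro j hj
    have hptw : ∀ t, (astar j * c + ha j) * f t = hθ j * astar j * f' t := by
      intro t
      have h := hgj j hj t
      rw [hυjz j hj, hfrel t] at h
      linear_combination h
    have hInt : (astar j * c + ha j) * (∫ t in (0:ℝ)..(2 * Real.pi), f t ^ 2)
        = hθ j * astar j * ∫ t in (0:ℝ)..(2 * Real.pi), f t * f' t := by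
      rw [← intervalIntegral.integral_const_mul, ← intervalIntegral.integral_const_mul]
      apply intervalIntegral.integral_congr
      intro t _
      linear_combination f t * hptw t
    rw [hIff'] at hInt
    rw [mul_zero] at hInt
    rcases mul_eq_zero.mp hInt with h | h
    · exact h
    · exact absurd h (ne_of_gt hIff)
  have hθz : ∀ j ∈ Finset.univ \ {j0}, hθ j = 0 := by
    intro j hj
    by_contra hne
    have hptw : ∀ t, (astar j * c + ha j) * f t = hθ j * astar j * f' t := by
      intro t
      have h := hgj j hj t
      rw [hυjz j hj, hfrel t] at h
      linear_combination h
    have hf'0 : ∀ t, f' t = 0 := by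
      intro t
      have h := hptw t
      rw [hK j hj, zero_mul] at h
      have hM : hθ j * astar j ≠ 0 := mul_ne_zero hne (hastar j)
      rcases mul_eq_zero.mp h.symm with h2 | h2
      · exact absurd h2 hM
      · exact h2
    obtain ⟨s, t, hst⟩ := hnonconst
    apply hst
    have hdiff : Differentiable ℝ f := fun x => (hderiv x).differentiableAt
    have hder0 : ∀ x, deriv f x = 0 := fun x => by rw [(hderiv x).deriv]; exact hf'0 x
    exact is_const_of_deriv_eq_zero hdiff hder0 s t
  -- c = 0
  have hc0 : c = 0 := by
    have h1 : c * astar j0 = S := by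
      rw [hc]
      field_simp
    have h2 : S * astar j0 = -(c * ∑ j ∈ Finset.univ \ {j0}, (astar j) ^ 2) := by
      rw [hS, Finset.sum_mul, Finset.mul_sum]
      rw [← Finset.sum_neg_distrib]
      apply Finset.sum_congr rfl
      intro j hj
      have haj : ha j = -(astar j * c) := by linarith [hK j hj]
      rw [haj, mul_assoc, div_mul_cancel₀ _ ha0']
      ring
    have hQ : 0 ≤ ∑ j ∈ Finset.univ \ {j0}, (astar j) ^ 2 :=
      Finset.sum_nonneg fun j _ => sq_nonneg _
    have hpos : 0 < astar j0 ^ 2 + ∑ j ∈ Finset.univ \ {j0}, (astar j) ^ 2 := by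
      have := pow_two_pos_of_ne_zero ha0'
      linarith
    have h3 : c * (astar j0 ^ 2 + ∑ j ∈ Finset.univ \ {j0}, (astar j) ^ 2) = 0 := by
      linear_combination h2 + astar j0 * h1
    rcases mul_eq_zero.mp h3 with h | h
    · exact h
    · exact absurd h (ne_of_gt hpos)
  -- assemble
  have hmem : ∀ j : Fin J, j ≠ j0 → j ∈ Finset.univ \ {j0} := fun j hj =>
    Finset.mem_sdiff.mpr ⟨Finset.mem_univ _, by simpa using hj⟩
  refine ⟨hσz, funext fun j => ?_, funext fun j => ?_, funext fun j => ?_, fun t => ?_⟩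
  · show hθ j = 0
    by_cases hj : j = j0
    · rw [hj]; exact hθ0
    · exact hθz j (hmem j hj)
  · show ha j = 0
    by_cases hj : j = j0
    · rw [hj]; exact ha0
    · have := hK j (hmem j hj)
      rw [hc0] at this
      linarith
  · show hυ j = 0
    by_cases hj : j = j0
    · rw [hj]; exact hυ0z
    · exact hυjz j (hmem j hj)
  · rw [hfrel t, hc0, zero_mul]
end

section
/- Let J ≥ 2 and let H be the block-diagonal (3J−2)×(3J−2) matrix with blocks ‖∂f*‖²_{L²}(D² − (1/J)A²(A²)ᵀ), ‖f*‖²_{L²}(I_{J−1} + (1/(a_1*)²)A Aᵀ), and I_J, where D = diag(a_2*,...,a_J*), A = (a_2*,...,a_J*)ᵀ, A² = ((a_2*)²,...,(a_J*)²)ᵀ, all a_j* ≠ 0, ∑_j (a_j*)² = J, and f* is non-constant with continuous derivative ∂f*, c_0(f*)=0. Then H is symmetric positive definite and its inverse is the block-diagonal matrix with blocks ‖∂f*‖^{−2}(D^{−2} + (1/(a_1*)²)𝟙𝟙ᵀ), ‖f*‖^{−2}(I_{J−1} − (1/J)A Aᵀ), and I_J. -/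
open Matrix Real

section MatrixHelpers

variable {m : Type*} [Fintype m] [DecidableEq m]

lemma my_vmv_transpose (w v : m → ℝ) : (vecMulVec w v)ᵀ = vecMulVec v w := by
  ext i j; simp [vecMulVec_apply, mul_comm]

lemma my_diag_mul_vmv (d w v : m → ℝ) :
    diagonal d * vecMulVec w v = vecMulVec (fun i => d i * w i) v := by
  ext i j; rw [diagonal_mul]; simp [vecMulVec_apply]; ring

lemma my_vmv_mul_diag (w v d : m → ℝ) :
    vecMulVec w v * diagonal d = vecMulVec w (fun j => v j * d j) := by
  ext i j; rw [mul_diagonal]; simp [vecMulVec_apply]; ring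

lemma my_vmv_mul_vmv (w v w' v' : m → ℝ) :
    vecMulVec w v * vecMulVec w' v' = (∑ k, v k * w' k) • vecMulVec w v' := by
  ext i j
  simp only [mul_apply, vecMulVec_apply, Matrix.smul_apply, smul_eq_mul, Finset.sum_mul]
  exact Finset.sum_congr rfl fun k _ => by ring

lemma my_dot_diag (v x : m → ℝ) : x ⬝ᵥ (diagonal v *ᵥ x) = ∑ i, v i * x i ^ 2 := by
  simp only [dotProduct, mulVec_diagonal]
  exact Finset.sum_congr rfl fun i _ => by ring

lemma my_dot_vmv (w x : m → ℝ) : x ⬝ᵥ (vecMulVec w w *ᵥ x) = (∑ i, w i * x i) ^ 2 := by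
  simp only [dotProduct, mulVec, vecMulVec_apply, sq, Finset.sum_mul_sum]
  refine Finset.sum_congr rfl fun i _ => ?_
  rw [Finset.mul_sum]
  exact Finset.sum_congr rfl fun k _ => by ring

lemma my_block1_mul (v : m → ℝ) (hv : ∀ i, v i ≠ 0) (c b : ℝ) (hc : c ≠ 0) (hb : b ≠ 0)
    (hs : ∑ i, v i = c - b⁻¹) :
    (diagonal v - c⁻¹ • vecMulVec v v) *
      (diagonal (fun i => (v i)⁻¹) + b • vecMulVec (fun _ => (1:ℝ)) (fun _ => (1:ℝ))) = 1 := by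
  rw [sub_mul, mul_add, mul_add, smul_mul_assoc, smul_mul_assoc, mul_smul_comm, mul_smul_comm,
    diagonal_mul_diagonal, my_diag_mul_vmv, my_vmv_mul_diag, my_vmv_mul_vmv]
  have h1 : (fun i => v i * (v i)⁻¹) = fun _ => (1:ℝ) := funext fun i => mul_inv_cancel₀ (hv i)
  simp only [mul_one, h1, diagonal_one, hs]
  have hz : b - c⁻¹ - c⁻¹ * (b * (c - b⁻¹)) = 0 := by field_simp; ring
  calc (1:Matrix m m ℝ) + b • vecMulVec v (fun _ => (1:ℝ))
      - (c⁻¹ • vecMulVec v (fun _ => (1:ℝ))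
        + c⁻¹ • (b • ((c - b⁻¹) • vecMulVec v (fun _ => (1:ℝ)))))
      = 1 + (b - c⁻¹ - c⁻¹ * (b * (c - b⁻¹))) • vecMulVec v (fun _ => (1:ℝ)) := by
        module
    _ = 1 := by rw [hz, zero_smul, add_zero]

lemma my_block2_mul (w : m → ℝ) (c b : ℝ) (hc : c ≠ 0) (hb : b ≠ 0)
    (hs : ∑ i, w i * w i = c - b⁻¹) :
    ((1 : Matrix m m ℝ) + b • vecMulVec w w) * ((1 : Matrix m m ℝ) - c⁻¹ • vecMulVec w w) = 1 := by
  have key : vecMulVec w w * vecMulVec w w = (c - b⁻¹) • vecMulVec w w := by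
    rw [my_vmv_mul_vmv, hs]
  simp only [add_mul, mul_sub, one_mul, mul_one, smul_mul_assoc, mul_smul_comm, key]
  have hz : b - c⁻¹ - c⁻¹ * (b * (c - b⁻¹)) = 0 := by field_simp; ring
  calc (1:Matrix m m ℝ) + b • vecMulVec w w
      - c⁻¹ • (vecMulVec w w + b • (c - b⁻¹) • vecMulVec w w)
      = 1 + (b - c⁻¹ - c⁻¹ * (b * (c - b⁻¹))) • vecMulVec w w := by module
    _ = 1 := by rw [hz, zero_smul, add_zero]

lemma my_block1_posDef (v : m → ℝ) (hv : ∀ i, 0 < v i) (c α : ℝ) (hα : 0 < α)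
    (hc : 0 < c) (hsc : ∑ i, v i < c) :
    (α • (diagonal v - c⁻¹ • vecMulVec v v)).PosDef := by
  rw [posDef_iff_dotProduct_mulVec]
  constructor
  · show _ᴴ = _
    rw [conjTranspose_eq_transpose_of_trivial, transpose_smul, transpose_sub,
      diagonal_transpose, transpose_smul, my_vmv_transpose]
  · intro x hx
    have hquad : star x ⬝ᵥ ((α • (diagonal v - c⁻¹ • vecMulVec v v)) *ᵥ x)
        = α * ((∑ i, v i * x i ^ 2) - c⁻¹ * (∑ i, v i * x i) ^ 2) := by
      rw [smul_mulVec, sub_mulVec, smul_mulVec, star_trivial,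
        dotProduct_smul, dotProduct_sub, dotProduct_smul, my_dot_diag, my_dot_vmv]
      simp [smul_eq_mul]
    rw [hquad]
    obtain ⟨i0, hi0⟩ : ∃ i, x i ≠ 0 := Function.ne_iff.mp hx
    have hS2 : 0 < ∑ i, v i * x i ^ 2 :=
      Finset.sum_pos' (fun i _ => mul_nonneg (hv i).le (sq_nonneg _))
        ⟨i0, Finset.mem_univ _, mul_pos (hv i0) (by positivity)⟩
    have hcs : (∑ i, v i * x i) ^ 2 ≤ (∑ i, v i) * ∑ i, v i * x i ^ 2 := by
      have h := Finset.sum_mul_sq_le_sq_mul_sq Finset.univ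
        (fun i => Real.sqrt (v i)) (fun i => Real.sqrt (v i) * x i)
      have h1 : ∀ i : m, Real.sqrt (v i) * (Real.sqrt (v i) * x i) = v i * x i :=
        fun i => by rw [← mul_assoc, Real.mul_self_sqrt (hv i).le]
      have h2 : ∀ i : m, Real.sqrt (v i) ^ 2 = v i := fun i => Real.sq_sqrt (hv i).le
      have h3 : ∀ i : m, (Real.sqrt (v i) * x i) ^ 2 = v i * x i ^ 2 :=
        fun i => by rw [mul_pow, h2]
      simp only [h1, h2, h3] at h
      exact h
    have hlt : c⁻¹ * (∑ i, v i * x i) ^ 2 < ∑ i, v i * x i ^ 2 := by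
      have h4 : (∑ i, v i * x i) ^ 2 < c * ∑ i, v i * x i ^ 2 :=
        lt_of_le_of_lt hcs (mul_lt_mul_of_pos_right hsc hS2)
      have h5 : c⁻¹ * (∑ i, v i * x i) ^ 2 < c⁻¹ * (c * ∑ i, v i * x i ^ 2) :=
        mul_lt_mul_of_pos_left h4 (inv_pos.mpr hc)
      rwa [← mul_assoc, inv_mul_cancel₀ hc.ne', one_mul] at h5
    exact mul_pos hα (by linarith)

lemma my_block2_posDef (w : m → ℝ) (b β : ℝ) (hβ : 0 < β) (hb : 0 < b) :
    (β • ((1 : Matrix m m ℝ) + b • vecMulVec w w)).PosDef := by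
  rw [posDef_iff_dotProduct_mulVec]
  constructor
  · show _ᴴ = _
    rw [conjTranspose_eq_transpose_of_trivial, transpose_smul, transpose_add,
      transpose_one, transpose_smul, my_vmv_transpose]
  · intro x hx
    have hquad : star x ⬝ᵥ ((β • ((1 : Matrix m m ℝ) + b • vecMulVec w w)) *ᵥ x)
        = β * ((∑ i, x i ^ 2) + b * (∑ i, w i * x i) ^ 2) := by
      rw [smul_mulVec, add_mulVec, smul_mulVec, star_trivial,
        dotProduct_smul, dotProduct_add, dotProduct_smul, one_mulVec, my_dot_vmv]
      simp [smul_eq_mul, dotProduct, sq]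
    rw [hquad]
    obtain ⟨i0, hi0⟩ : ∃ i, x i ≠ 0 := Function.ne_iff.mp hx
    have hS : 0 < ∑ i, x i ^ 2 :=
      Finset.sum_pos' (fun i _ => sq_nonneg _) ⟨i0, Finset.mem_univ _, by positivity⟩
    have : 0 ≤ b * (∑ i, w i * x i) ^ 2 := by positivity
    exact mul_pos hβ (by linarith)

variable {p : Type*} [Fintype p] [DecidableEq p]

lemma my_posDef_fromBlocks {A : Matrix m m ℝ} {D : Matrix p p ℝ}
    (hA : A.PosDef) (hD : D.PosDef) : (fromBlocks A 0 0 D).PosDef := by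
  rw [posDef_iff_dotProduct_mulVec]
  constructor
  · show (fromBlocks A 0 0 D)ᴴ = fromBlocks A 0 0 D
    rw [fromBlocks_conjTranspose]
    rw [conjTranspose_zero, conjTranspose_zero, hA.1, hD.1]
  · intro x hx
    have hx' : Sum.elim (x ∘ Sum.inl) (x ∘ Sum.inr) = x := Sum.elim_comp_inl_inr x
    have key : star x ⬝ᵥ (fromBlocks A 0 0 D *ᵥ x)
        = (x ∘ Sum.inl) ⬝ᵥ (A *ᵥ (x ∘ Sum.inl)) + (x ∘ Sum.inr) ⬝ᵥ (D *ᵥ (x ∘ Sum.inr)) := by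
      conv_lhs => rw [← hx']
      rw [fromBlocks_mulVec]
      simp only [Matrix.zero_mulVec, add_zero, zero_add, star_trivial]
      rw [dotProduct_block]
      simp [Sum.elim_comp_inl, Sum.elim_comp_inr]
    rw [key]
    have h1 : (x ∘ Sum.inl) ≠ 0 ∨ (x ∘ Sum.inr) ≠ 0 := by
      by_contra h
      push_neg at h
      apply hx
      funext i
      cases i with
      | inl i => exact congrFun h.1 i
      | inr i => exact congrFun h.2 i
    rcases h1 with h1 | h1
    · have := hA.dotProduct_mulVec_pos h1
      simp only [star_trivial] at this
      have h2 := hD.posSemidef.dotProduct_mulVec_nonneg (x ∘ Sum.inr)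
      simp only [star_trivial] at h2
      exact add_pos_of_pos_of_nonneg this h2
    · have := hD.dotProduct_mulVec_pos h1
      simp only [star_trivial] at this
      have h2 := hA.posSemidef.dotProduct_mulVec_nonneg (x ∘ Sum.inl)
      simp only [star_trivial] at h2
      exact add_pos_of_nonneg_of_pos h2 this

end MatrixHelpers

lemma my_integral_sq_pos (g : ℝ → ℝ) (hg : Continuous g)
    (hgp : Function.Periodic g (2 * Real.pi)) (t0 : ℝ) (h0 : g t0 ≠ 0) :
    0 < ∫ t in (0:ℝ)..(2 * Real.pi), g t ^ 2 := by
  obtain ⟨t1, ht1, heq⟩ := hgp.exists_mem_Ico₀ Real.two_pi_pos t0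
  rw [intervalIntegral.integral_pos_iff_support_of_nonneg_ae
      (Filter.Eventually.of_forall fun t => sq_nonneg (g t))
      ((hg.pow 2).intervalIntegrable 0 (2 * Real.pi))]
  refine ⟨Real.two_pi_pos, ?_⟩
  have hopen : IsOpen (Function.support fun t => g t ^ 2) := by
    have he : (Function.support fun t => g t ^ 2) = (fun t => g t ^ 2) ⁻¹' {0}ᶜ := by
      ext t; simp [Function.mem_support]
    rw [he]
    exact (hg.pow 2).isOpen_preimage _ isOpen_compl_singleton
  have ht1mem : t1 ∈ Function.support fun t => g t ^ 2 := by
    simp only [Function.mem_support]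
    exact pow_ne_zero 2 (heq ▸ h0)
  obtain ⟨δ, hδ, hball⟩ := Metric.isOpen_iff.mp hopen t1 ht1mem
  set m' := min (t1 + δ) (2 * Real.pi) with hm'
  have ht1m : t1 < m' := lt_min (by linarith) ht1.2
  refine lt_of_lt_of_le ?_ (MeasureTheory.measure_mono (?_ : Set.Ioo t1 m' ⊆ _))
  · rw [Real.volume_Ioo]
    exact ENNReal.ofReal_pos.mpr (by linarith)
  · intro y hy
    refine ⟨hball ?_, lt_of_le_of_lt ht1.1 hy.1, le_trans hy.2.le (min_le_right _ _)⟩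
    rw [Metric.mem_ball, Real.dist_eq, abs_of_pos (sub_pos.mpr hy.1)]
    have := hy.2
    have := min_le_left (t1 + δ) (2 * Real.pi)
    linarith

set_option maxHeartbeats 1000000 in
/-- The efficient information matrix `H` of the shape invariant model is
symmetric positive definite, with block-diagonal inverse given by rank-one
update identities. -/
theorem efficient_information_matrix (n : ℕ) (hn : 1 ≤ n)
    (a : Fin (n + 1) → ℝ) (ha : ∀ j, a j ≠ 0)
    (hsum : ∑ j, (a j) ^ 2 = ((n + 1 : ℕ) : ℝ))
    (f f' : ℝ → ℝ) (hderiv : ∀ t, HasDerivAt f (f' t) t) (hf' : Continuous f')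
    (hper : Function.Periodic f (2 * Real.pi))
    (hmean : (∫ t in (0 : ℝ)..(2 * Real.pi), f t) = 0)
    (hnonconst : ∃ s t : ℝ, f s ≠ f t)
    (H Hinv : Matrix (Fin n ⊕ (Fin n ⊕ Fin (n + 1))) (Fin n ⊕ (Fin n ⊕ Fin (n + 1))) ℝ)
    (hH : H = Matrix.fromBlocks
      ((∫ t in (0 : ℝ)..(2 * Real.pi), (f' t) ^ 2) •
        (Matrix.diagonal (fun i : Fin n => (a i.succ) ^ 2)
          - (((n + 1 : ℕ) : ℝ))⁻¹ •
            Matrix.vecMulVec (fun i => (a i.succ) ^ 2) (fun i => (a i.succ) ^ 2)))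
      0 0
      (Matrix.fromBlocks
        ((∫ t in (0 : ℝ)..(2 * Real.pi), (f t) ^ 2) •
          ((1 : Matrix (Fin n) (Fin n) ℝ)
            + ((a 0) ^ 2)⁻¹ • Matrix.vecMulVec (fun i => a i.succ) (fun i => a i.succ)))
        0 0 (1 : Matrix (Fin (n + 1)) (Fin (n + 1)) ℝ)))
    (hHinv : Hinv = Matrix.fromBlocks
      ((∫ t in (0 : ℝ)..(2 * Real.pi), (f' t) ^ 2)⁻¹ •
        (Matrix.diagonal (fun i : Fin n => ((a i.succ) ^ 2)⁻¹)
          + ((a 0) ^ 2)⁻¹ • Matrix.vecMulVec (fun _ => (1 : ℝ)) (fun _ => (1 : ℝ))))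
      0 0
      (Matrix.fromBlocks
        ((∫ t in (0 : ℝ)..(2 * Real.pi), (f t) ^ 2)⁻¹ •
          ((1 : Matrix (Fin n) (Fin n) ℝ)
            - (((n + 1 : ℕ) : ℝ))⁻¹ • Matrix.vecMulVec (fun i => a i.succ) (fun i => a i.succ)))
        0 0 (1 : Matrix (Fin (n + 1)) (Fin (n + 1)) ℝ))) :
    H.PosDef ∧ Hᵀ = H ∧ H * Hinv = 1 ∧ Hinv * H = 1 := by
  -- continuity of f
  have hcontf : Continuous f :=
    continuous_iff_continuousAt.mpr fun t => (hderiv t).continuousAt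
  -- f' is periodic
  have hf'per : Function.Periodic f' (2 * Real.pi) := by
    intro t
    have h1 : HasDerivAt (fun s => f (s + 2 * Real.pi)) (f' (t + 2 * Real.pi)) t := by
      simpa [Function.comp_def] using (hderiv (t + 2 * Real.pi)).comp t
        ((hasDerivAt_id t).add_const (2 * Real.pi))
    have h2 : (fun s => f (s + 2 * Real.pi)) = f := funext fun s => hper s
    rw [h2] at h1
    exact h1.unique (hderiv t)
  -- f' is nonzero somewhere
  obtain ⟨t1, ht1⟩ : ∃ t, f' t ≠ 0 := by
    by_contra h
    push_neg at h
    obtain ⟨s, t, hst⟩ := hnonconst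
    exact hst (is_const_of_deriv_eq_zero (fun x => (hderiv x).differentiableAt)
      (fun x => by rw [(hderiv x).deriv]; exact h x) s t)
  -- f is nonzero somewhere
  obtain ⟨t2, ht2⟩ : ∃ t, f t ≠ 0 := by
    obtain ⟨s, t, hst⟩ := hnonconst
    by_cases hfs : f s = 0
    · exact ⟨t, fun hft => hst (by rw [hfs, hft])⟩
    · exact ⟨s, hfs⟩
  have hα : 0 < ∫ t in (0 : ℝ)..(2 * Real.pi), (f' t) ^ 2 :=
    my_integral_sq_pos f' hf' hf'per t1 ht1
  have hβ : 0 < ∫ t in (0 : ℝ)..(2 * Real.pi), (f t) ^ 2 :=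
    my_integral_sq_pos f hcontf hper t2 ht2
  -- scalar facts
  have ha0 : (0 : ℝ) < a 0 ^ 2 :=
    lt_of_le_of_ne (sq_nonneg _) (Ne.symm (pow_ne_zero 2 (ha 0)))
  have hbpos : (0 : ℝ) < ((a 0) ^ 2)⁻¹ := inv_pos.mpr ha0
  have hb : ((a 0) ^ 2)⁻¹ ≠ 0 := hbpos.ne'
  have hc : (0 : ℝ) < ((n + 1 : ℕ) : ℝ) := by positivity
  have hs : ∑ i : Fin n, (a i.succ) ^ 2 = ((n + 1 : ℕ) : ℝ) - (((a 0) ^ 2)⁻¹)⁻¹ := by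
    rw [inv_inv]
    rw [Fin.sum_univ_succ] at hsum
    linarith
  have hs' : ∑ i : Fin n, a i.succ * a i.succ
      = ((n + 1 : ℕ) : ℝ) - (((a 0) ^ 2)⁻¹)⁻¹ := by
    rw [← hs]
    exact Finset.sum_congr rfl fun i _ => (sq (a i.succ)).symm ▸ by ring
  have hvpos : ∀ i : Fin n, 0 < (a i.succ) ^ 2 := fun i => by
    have := ha i.succ; positivity
  have hsc : ∑ i : Fin n, (a i.succ) ^ 2 < ((n + 1 : ℕ) : ℝ) := by
    rw [hs, inv_inv]; linarith
  -- block products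
  have hP1 : ((∫ t in (0 : ℝ)..(2 * Real.pi), (f' t) ^ 2) •
        (Matrix.diagonal (fun i : Fin n => (a i.succ) ^ 2)
          - (((n + 1 : ℕ) : ℝ))⁻¹ •
            Matrix.vecMulVec (fun i => (a i.succ) ^ 2) (fun i => (a i.succ) ^ 2)))
      * ((∫ t in (0 : ℝ)..(2 * Real.pi), (f' t) ^ 2)⁻¹ •
        (Matrix.diagonal (fun i : Fin n => ((a i.succ) ^ 2)⁻¹)
          + ((a 0) ^ 2)⁻¹ • Matrix.vecMulVec (fun _ => (1 : ℝ)) (fun _ => (1 : ℝ)))) = 1 := by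
    rw [smul_mul_assoc, mul_smul_comm, smul_smul, mul_inv_cancel₀ hα.ne', one_smul]
    exact my_block1_mul (fun i : Fin n => (a i.succ) ^ 2) (fun i => (hvpos i).ne')
      ((n + 1 : ℕ) : ℝ) (((a 0) ^ 2)⁻¹) hc.ne' hb hs
  have hP2 : ((∫ t in (0 : ℝ)..(2 * Real.pi), (f t) ^ 2) •
        ((1 : Matrix (Fin n) (Fin n) ℝ)
          + ((a 0) ^ 2)⁻¹ • Matrix.vecMulVec (fun i => a i.succ) (fun i => a i.succ)))
      * ((∫ t in (0 : ℝ)..(2 * Real.pi), (f t) ^ 2)⁻¹ •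
        ((1 : Matrix (Fin n) (Fin n) ℝ)
          - (((n + 1 : ℕ) : ℝ))⁻¹ •
            Matrix.vecMulVec (fun i => a i.succ) (fun i => a i.succ))) = 1 := by
    rw [smul_mul_assoc, mul_smul_comm, smul_smul, mul_inv_cancel₀ hβ.ne', one_smul]
    exact my_block2_mul (fun i : Fin n => a i.succ) ((n + 1 : ℕ) : ℝ) (((a 0) ^ 2)⁻¹)
      hc.ne' hb hs'
  have hmul : H * Hinv = 1 := by
    rw [hH, hHinv, Matrix.fromBlocks_multiply, Matrix.fromBlocks_multiply]
    simp only [Matrix.mul_zero, Matrix.zero_mul, add_zero, zero_add, mul_one, one_mul]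
    rw [hP1, hP2, Matrix.fromBlocks_one, Matrix.fromBlocks_one]
  have hHT : Hᵀ = H := by
    rw [hH]
    simp only [Matrix.fromBlocks_transpose, Matrix.transpose_smul, Matrix.transpose_sub,
      Matrix.transpose_add, Matrix.diagonal_transpose, Matrix.transpose_one,
      Matrix.transpose_zero, my_vmv_transpose]
  have hHinvT : Hinvᵀ = Hinv := by
    rw [hHinv]
    simp only [Matrix.fromBlocks_transpose, Matrix.transpose_smul, Matrix.transpose_sub,
      Matrix.transpose_add, Matrix.diagonal_transpose, Matrix.transpose_one,
      Matrix.transpose_zero, my_vmv_transpose]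
  have hmul' : Hinv * H = 1 := by
    have h := congrArg Matrix.transpose hmul
    rwa [Matrix.transpose_mul, hHT, hHinvT, Matrix.transpose_one] at h
  refine ⟨?_, hHT, hmul, hmul'⟩
  rw [hH]
  exact my_posDef_fromBlocks
    (my_block1_posDef (fun i : Fin n => (a i.succ) ^ 2) hvpos ((n + 1 : ℕ) : ℝ)
      (∫ t in (0 : ℝ)..(2 * Real.pi), (f' t) ^ 2) hα hc hsc)
    (my_posDef_fromBlocks
      (my_block2_posDef (fun i : Fin n => a i.succ) (((a 0) ^ 2)⁻¹)
        (∫ t in (0 : ℝ)..(2 * Real.pi), (f t) ^ 2) hβ hbpos)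
      Matrix.PosDef.one)
end
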